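/- Every nonzero element $c \in \mathcal{R}_K$ can be factored as $c = c' \circ t^{q^m}$ where $m$ is the order of $c$ (the least index with nonzero coefficient) and $c'$ is invertible in $\mathcal{R}_K$ with respect to composition. -/

import Mathlib

open scoped Classical

set_option maxHeartbeats 1000000
set_option synthInstance.maxHeartbeats 400000

/- STATEMENT 4: every nonzero c ∈ 𝓡_K factors as c = c' ∘ t^{q^m}, where m is the order
of c and c' is invertible in 𝓡_K with respect to composition. -/

/-- The field K = 𝔽_q((x)) of formal Laurent series over 𝔽_q, q = p^v. -/
abbrev Kf (p v : ℕ) [Fact p.Prime] := LaurentSeries (GaloisField p v)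

/-- The absolute value |t| = q^{-N} on K, where N is the order of vanishing. -/
noncomputable def labs (p v : ℕ) [Fact p.Prime] (f : Kf p v) : ℝ :=
  if f = 0 then 0 else ((p : ℝ) ^ v) ^ (-f.order)

/-- Membership in 𝓡_K: coefficients satisfy |a_k| ≤ A^{q^k} for some constant A > 0. -/
def InRK (p v : ℕ) [Fact p.Prime] (a : ℕ → Kf p v) : Prop :=
  ∃ A > (0 : ℝ), ∀ k, labs p v (a k) ≤ A ^ (p ^ v) ^ k

/-- Coefficients of the composition: `(a ∘ b)_l = ∑_{n=0}^l a_n b_{l-n}^{q^n}`. -/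
def compC {F : Type*} [Field F] (q : ℕ) (a b : ℕ → F) : ℕ → F :=
  fun l => ∑ n ∈ Finset.range (l + 1), a n * b (l - n) ^ q ^ n

/-- Coefficients of the m-fold Frobenius power `t^{q^m}`; `frobC 0` is the unit `t`. -/
def frobC (F : Type*) [Field F] (m : ℕ) : ℕ → F := fun k => if k = m then 1 else 0

namespace RKaux
variable (p v : ℕ) [Fact p.Prime]

lemma base_one_lt (hv : 0 < v) : (1:ℝ) < (p:ℝ) ^ v := by
  have hp : 2 ≤ p := (Fact.out : p.Prime).two_le
  have h2 : (2:ℝ) ≤ (p:ℝ) := by exact_mod_cast hp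
  calc (1:ℝ) < 2 ^ v := one_lt_pow₀ one_lt_two (by omega)
    _ ≤ (p:ℝ) ^ v := pow_le_pow_left₀ (by norm_num) h2 v

lemma base_pos : (0:ℝ) < (p:ℝ) ^ v := by
  have hp : 0 < p := (Fact.out : p.Prime).pos
  positivity

lemma labs_zero : labs p v 0 = 0 := by simp [labs]

lemma labs_of_ne {f : Kf p v} (hf : f ≠ 0) : labs p v f = ((p:ℝ) ^ v) ^ (-f.order) := by
  simp [labs, hf]

lemma labs_pos {f : Kf p v} (hf : f ≠ 0) : 0 < labs p v f := by
  rw [labs_of_ne p v hf]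
  exact zpow_pos (base_pos p v) _

lemma labs_nonneg (f : Kf p v) : 0 ≤ labs p v f := by
  by_cases hf : f = 0
  · simp [hf, labs_zero]
  · exact (labs_pos p v hf).le

lemma labs_mul (f g : Kf p v) : labs p v (f * g) = labs p v f * labs p v g := by
  by_cases hf : f = 0
  · simp [hf, labs_zero]
  by_cases hg : g = 0
  · simp [hg, labs_zero]
  have hfg : f * g ≠ 0 := mul_ne_zero hf hg
  rw [labs_of_ne p v hf, labs_of_ne p v hg, labs_of_ne p v hfg,
    HahnSeries.order_mul hf hg, neg_add, zpow_add₀ (ne_of_gt (base_pos p v))]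

lemma one_ne_zero' : (1 : Kf p v) ≠ 0 := by
  intro h
  have := congrArg (fun f : Kf p v => f.coeff 0) h
  simp at this

lemma labs_one : labs p v 1 = 1 := by
  rw [labs_of_ne p v (one_ne_zero' p v), HahnSeries.order_one, neg_zero, zpow_zero]

lemma labs_inv (f : Kf p v) : labs p v f⁻¹ = (labs p v f)⁻¹ := by
  by_cases hf : f = 0
  · simp [hf, labs_zero]
  · have h : labs p v f⁻¹ * labs p v f = 1 := by
      rw [← labs_mul, inv_mul_cancel₀ hf, labs_one]
    exact eq_inv_of_mul_eq_one_left h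

lemma labs_pow (f : Kf p v) (n : ℕ) : labs p v (f ^ n) = labs p v f ^ n := by
  induction n with
  | zero => simp [labs_one]
  | succ k ih => rw [pow_succ, labs_mul, ih, pow_succ]

lemma labs_neg (f : Kf p v) : labs p v (-f) = labs p v f := by
  unfold labs
  rw [neg_eq_zero, HahnSeries.order_neg]

lemma labs_add_le (hv : 0 < v) (f g : Kf p v) :
    labs p v (f + g) ≤ max (labs p v f) (labs p v g) := by
  by_cases hfg : f + g = 0
  · simp [hfg, labs_zero, le_max_iff, labs_nonneg]
  by_cases hf : f = 0
  · rw [hf, zero_add]; exact le_max_right _ _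
  by_cases hg : g = 0
  · rw [hg, add_zero]; exact le_max_left _ _
  have hord := HahnSeries.min_order_le_order_add hfg
  have hb1 : (1:ℝ) ≤ (p:ℝ) ^ v := (base_one_lt p v hv).le
  rw [labs_of_ne p v hfg, labs_of_ne p v hf, labs_of_ne p v hg]
  rcases le_total f.order g.order with h | h
  · rw [min_eq_left h] at hord
    exact le_max_of_le_left (zpow_le_zpow_right₀ hb1 (by omega))
  · rw [min_eq_right h] at hord
    exact le_max_of_le_right (zpow_le_zpow_right₀ hb1 (by omega))

lemma labs_sum_le (hv : 0 < v) {ι : Type*} (s : Finset ι) (f : ι → Kf p v) {M : ℝ}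
    (hM : 0 ≤ M) (h : ∀ i ∈ s, labs p v (f i) ≤ M) :
    labs p v (∑ i ∈ s, f i) ≤ M := by
  induction s using Finset.cons_induction with
  | empty => simpa [labs_zero] using hM
  | cons a s ha ih =>
      rw [Finset.sum_cons]
      exact le_trans (labs_add_le p v hv _ _)
        (max_le (h a (Finset.mem_cons_self a s)) (ih fun i hi => h i (Finset.mem_cons_of_mem hi)))

noncomputable def linv {F : Type*} [Field F] (q : ℕ) (a : ℕ → F) : ℕ → F
  | 0 => (a 0)⁻¹
  | (l+1) => -((a 0) ^ q ^ (l+1))⁻¹ *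
      ∑ n ∈ (Finset.range (l+1)).attach, linv q a n * a (l+1-(n:ℕ)) ^ q ^ (n:ℕ)
  decreasing_by have := n.2; simp only [Finset.mem_range] at this; omega

noncomputable def rinv {F : Type*} [Field F] (q : ℕ) (a : ℕ → F) : ℕ → F
  | 0 => (a 0)⁻¹
  | (l+1) => -(a 0)⁻¹ *
      ∑ n ∈ (Finset.range (l+1)).attach, a ((n:ℕ)+1) * rinv q a (l-(n:ℕ)) ^ q ^ ((n:ℕ)+1)
  decreasing_by have := n.2; simp only [Finset.mem_range] at this; omega

variable {F : Type*} [Field F]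

lemma linv_zero (q : ℕ) (a : ℕ → F) : linv q a 0 = (a 0)⁻¹ := by rw [linv]

lemma linv_succ (q : ℕ) (a : ℕ → F) (l : ℕ) :
    linv q a (l+1) = -((a 0) ^ q ^ (l+1))⁻¹ *
      ∑ n ∈ Finset.range (l+1), linv q a n * a (l+1-n) ^ q ^ n := by
  rw [linv, Finset.sum_attach (Finset.range (l+1)) (fun n => linv q a n * a (l+1-n) ^ q ^ n)]

lemma rinv_zero (q : ℕ) (a : ℕ → F) : rinv q a 0 = (a 0)⁻¹ := by rw [rinv]

lemma rinv_succ (q : ℕ) (a : ℕ → F) (l : ℕ) :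
    rinv q a (l+1) = -(a 0)⁻¹ *
      ∑ n ∈ Finset.range (l+1), a (n+1) * rinv q a (l-n) ^ q ^ (n+1) := by
  rw [rinv, Finset.sum_attach (Finset.range (l+1)) (fun n => a (n+1) * rinv q a (l-n) ^ q ^ (n+1))]

lemma compC_linv (q : ℕ) (a : ℕ → F) (ha : a 0 ≠ 0) (l : ℕ) :
    compC q (linv q a) a l = frobC F 0 l := by
  cases l with
  | zero =>
      simp [compC, frobC, linv_zero, inv_mul_cancel₀ ha]
  | succ l =>
      have hx : (a 0) ^ q ^ (l+1) ≠ 0 := pow_ne_zero _ ha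
      simp only [compC, frobC, Finset.sum_range_succ, Nat.sub_self, linv_succ, Nat.add_one_ne_zero, ↓reduceIte]
      field_simp
      ring

lemma compC_rinv (q : ℕ) (a : ℕ → F) (ha : a 0 ≠ 0) (l : ℕ) :
    compC q a (rinv q a) l = frobC F 0 l := by
  cases l with
  | zero => simp [compC, frobC, rinv_zero, mul_inv_cancel₀ ha]
  | succ l =>
      simp only [compC, frobC, Finset.sum_range_succ', Nat.sub_zero, pow_zero, pow_one,
        rinv_succ, Nat.succ_sub_succ, Nat.add_one_ne_zero, ↓reduceIte]
      field_simp
      ring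

lemma compC_id_left (q : ℕ) (a : ℕ → F) (l : ℕ) : compC q (frobC F 0) a l = a l := by
  unfold compC frobC
  rw [Finset.sum_eq_single_of_mem 0 (Finset.mem_range.mpr (by omega))]
  · simp
  · intro n _ hn; simp [hn]

lemma compC_id_right (q : ℕ) (hq : q ≠ 0) (a : ℕ → F) (l : ℕ) :
    compC q a (frobC F 0) l = a l := by
  unfold compC frobC
  rw [Finset.sum_eq_single_of_mem l (Finset.mem_range.mpr (by omega))]
  · simp
  · intro n hn hne
    have : l - n ≠ 0 := by simp at hn; omega
    simp [this, zero_pow (pow_ne_zero _ hq)]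

lemma tri_sum {M : Type*} [AddCommMonoid M] (l : ℕ) (f : ℕ → ℕ → M) :
    ∑ n ∈ Finset.range (l+1), ∑ i ∈ Finset.range (n+1), f n i
      = ∑ i ∈ Finset.range (l+1), ∑ j ∈ Finset.range (l-i+1), f (i+j) i := by
  rw [Finset.sum_sigma', Finset.sum_sigma']
  refine Finset.sum_nbij' (fun x => ⟨x.2, x.1 - x.2⟩) (fun x => ⟨x.1 + x.2, x.1⟩)
    ?_ ?_ ?_ ?_ ?_
  · rintro ⟨n, i⟩ h
    simp only [Finset.mem_sigma, Finset.mem_range] at h ⊢; omega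
  · rintro ⟨i, j⟩ h
    simp only [Finset.mem_sigma, Finset.mem_range] at h ⊢; omega
  · rintro ⟨n, i⟩ h
    simp only [Finset.mem_sigma, Finset.mem_range] at h
    dsimp only
    rw [show i + (n - i) = n from by omega]
  · rintro ⟨i, j⟩ h
    simp only [Finset.mem_sigma, Finset.mem_range] at h
    dsimp only
    exact Sigma.ext (by simp) (by simp)
  · rintro ⟨n, i⟩ h
    simp only [Finset.mem_sigma, Finset.mem_range] at h
    dsimp only
    have : i + (n - i) = n := by omega
    rw [this]

lemma compC_assoc (p : ℕ) [Fact p.Prime] [CharP F p] (v : ℕ) (a b c : ℕ → F) (l : ℕ) :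
    compC (p^v) (compC (p^v) a b) c l = compC (p^v) a (compC (p^v) b c) l := by
  haveI : ExpChar F p := ExpChar.prime Fact.out
  unfold compC
  have rhs : ∀ i, (∑ j ∈ Finset.range (l - i + 1), b j * c (l - i - j) ^ (p^v) ^ j) ^ (p^v) ^ i
      = ∑ j ∈ Finset.range (l - i + 1), b j ^ (p^v) ^ i * c (l - i - j) ^ (p^v) ^ (i + j) := by
    intro i
    rw [show (p^v)^i = p^(v*i) from (pow_mul p v i).symm, sum_pow_char_pow]
    refine Finset.sum_congr rfl fun j _ => ?_
    rw [mul_pow, pow_mul p v i, ← pow_mul (c (l - i - j)), ← pow_add (p^v) j i, add_comm j i]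
  have right_eq : ∑ i ∈ Finset.range (l+1),
        a i * (∑ j ∈ Finset.range (l - i + 1), b j * c (l - i - j) ^ (p^v) ^ j) ^ (p^v) ^ i
      = ∑ i ∈ Finset.range (l+1), ∑ j ∈ Finset.range (l - i + 1),
          a i * (b j ^ (p^v) ^ i * c (l - i - j) ^ (p^v) ^ (i + j)) :=
    Finset.sum_congr rfl fun i _ => by rw [rhs i, Finset.mul_sum]
  rw [right_eq]
  simp only [Finset.sum_mul]
  rw [tri_sum l (fun n i => a i * b (n - i) ^ (p^v) ^ i * c (l - n) ^ (p^v) ^ n)]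
  refine Finset.sum_congr rfl fun i hi => Finset.sum_congr rfl fun j hj => ?_
  simp only [Finset.mem_range] at hi hj
  have h1 : i + j - i = j := by omega
  have h2 : l - (i + j) = l - i - j := by omega
  rw [h1, h2]
  ring

instance instCharPKf : CharP (Kf p v) p :=
  charP_of_injective_ringHom (HahnSeries.C_injective (R := GaloisField p v) (Γ := ℤ)) p

lemma linv_bound (hv : 0 < v) (a : ℕ → Kf p v) (ha : a 0 ≠ 0)
    {A : ℝ} (hA1 : 1 ≤ A) (hbd : ∀ k, labs p v (a k) ≤ A ^ (p^v) ^ k) :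
    ∃ B > (0:ℝ), ∀ l, labs p v (linv (p^v) a l) ≤ B ^ (p^v) ^ l := by
  set q := p ^ v with hqdef
  have hq2 : 2 ≤ q := by
    have hp : 2 ≤ p := (Fact.out : p.Prime).two_le
    calc 2 = 2^1 := (pow_one 2).symm
      _ ≤ 2^v := Nat.pow_le_pow_right (by norm_num) hv
      _ ≤ p^v := Nat.pow_le_pow_left hp v
  set r := labs p v (a 0) with hrdef
  have hr : 0 < r := labs_pos p v ha
  have hrA : r ≤ A := by simpa using hbd 0
  have hAr1 : 1 ≤ A / r := (one_le_div hr).mpr hrA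
  set B := max r⁻¹ ((A/r)^2) with hB
  have hB1 : 1 ≤ B := le_max_of_le_right (one_le_pow₀ hAr1)
  have hBpos : 0 < B := lt_of_lt_of_le one_pos hB1
  refine ⟨B, hBpos, ?_⟩
  intro l
  induction l using Nat.strong_induction_on with
  | _ l ih =>
    cases l with
    | zero =>
        rw [linv_zero, pow_zero, pow_one, labs_inv]
        exact le_max_left _ _
    | succ l =>
      rw [linv_succ, labs_mul, labs_neg, labs_inv, labs_pow]
      have hS : labs p v (∑ n ∈ Finset.range (l+1), linv q a n * a (l+1-n) ^ q^n)
          ≤ B ^ q^l * A ^ q^(l+1) := by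
        refine labs_sum_le p v hv _ _ (by positivity) ?_
        intro n hn
        simp only [Finset.mem_range] at hn
        rw [labs_mul, labs_pow]
        have h1 : labs p v (linv q a n) ≤ B ^ q^n := ih n (by omega)
        have h3 : labs p v (a (l+1-n)) ^ q^n ≤ (A ^ q^(l+1-n)) ^ q^n :=
          pow_le_pow_left₀ (labs_nonneg p v _) (hbd _) _
        have h4 : (A ^ q^(l+1-n)) ^ q^n = A ^ q^(l+1) := by
          rw [← pow_mul, ← pow_add, show l+1-n+n = l+1 from by omega]
        have h5 : B ^ q^n ≤ B ^ q^l :=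
          pow_le_pow_right₀ hB1 (Nat.pow_le_pow_right (by omega) (by omega))
        calc labs p v (linv q a n) * labs p v (a (l+1-n)) ^ q^n
            ≤ B ^ q^n * A ^ q^(l+1) :=
              mul_le_mul h1 (h3.trans_eq h4) (pow_nonneg (labs_nonneg p v _) _)
                (pow_nonneg hBpos.le _)
          _ ≤ B ^ q^l * A ^ q^(l+1) := by
              have : (0:ℝ) ≤ A ^ q^(l+1) := by positivity
              exact mul_le_mul_of_nonneg_right h5 this
      have key : (r ^ q^(l+1))⁻¹ * (B ^ q^l * A ^ q^(l+1)) ≤ B ^ q^(l+1) := by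
        have hql : q^l + q^l ≤ q^(l+1) := by
          calc q^l + q^l = 2*q^l := by omega
            _ ≤ q*q^l := Nat.mul_le_mul hq2 le_rfl
            _ = q^(l+1) := (pow_succ' q l).symm
        have e1 : (r ^ q^(l+1))⁻¹ * (B ^ q^l * A ^ q^(l+1)) = B ^ q^l * (A/r) ^ q^(l+1) := by
          rw [div_pow]
          field_simp
        rw [e1]
        have e2 : (A/r) ^ q^(l+1) ≤ B ^ (q^(l+1) - q^l) := by
          have h6 : q^(l+1) ≤ 2*(q^(l+1) - q^l) := by omega
          calc (A/r) ^ q^(l+1) ≤ (A/r) ^ (2*(q^(l+1) - q^l)) :=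
                pow_le_pow_right₀ hAr1 h6
            _ = ((A/r)^2) ^ (q^(l+1) - q^l) := by rw [pow_mul (A/r) 2 _]
            _ ≤ B ^ (q^(l+1) - q^l) := pow_le_pow_left₀ (by positivity) (le_max_right _ _) _
        calc B ^ q^l * (A/r)^q^(l+1) ≤ B ^ q^l * B ^ (q^(l+1) - q^l) :=
              mul_le_mul_of_nonneg_left e2 (by positivity)
          _ = B ^ (q^l + (q^(l+1) - q^l)) := (pow_add B _ _).symm
          _ = B ^ q^(l+1) := by congr 1; omega
      calc (r ^ q^(l+1))⁻¹ * labs p v (∑ n ∈ Finset.range (l+1), linv q a n * a (l+1-n) ^ q^n)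
          ≤ (r ^ q^(l+1))⁻¹ * (B ^ q^l * A ^ q^(l+1)) := by
            have : (0:ℝ) ≤ (r ^ q^(l+1))⁻¹ := by positivity
            exact mul_le_mul_of_nonneg_left hS this
        _ ≤ B ^ q^(l+1) := key

end RKaux

theorem RK_factorization (p v : ℕ) [Fact p.Prime] (hv : 0 < v)
    (c : ℕ → Kf p v) (hc : InRK p v c) (m : ℕ)
    (hm : c m ≠ 0) (hm' : ∀ k < m, c k = 0) :
    ∃ c' e : ℕ → Kf p v, InRK p v c' ∧ InRK p v e ∧
      (∀ l, compC (p ^ v) c' e l = frobC (Kf p v) 0 l) ∧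
      (∀ l, compC (p ^ v) e c' l = frobC (Kf p v) 0 l) ∧
      ∀ l, c l = compC (p ^ v) c' (frobC (Kf p v) m) l := by
  classical
  obtain ⟨A₀, hA₀pos, hA₀⟩ := hc
  set q := p ^ v with hqdef
  have hq0 : q ≠ 0 := by
    have : 0 < p := (Fact.out : p.Prime).pos
    positivity
  set A := max A₀ 1 with hA
  have hA1 : 1 ≤ A := le_max_right _ _
  have hbdc : ∀ k, labs p v (c k) ≤ A ^ q ^ k := fun k =>
    le_trans (hA₀ k) (pow_le_pow_left₀ hA₀pos.le (le_max_left _ _) _)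
  set c' : ℕ → Kf p v := fun k => c (k + m) with hc'def
  have hc'0 : c' 0 ≠ 0 := by simpa [hc'def] using hm
  have hbd' : ∀ k, labs p v (c' k) ≤ (A ^ q ^ m) ^ q ^ k := by
    intro k
    have : (A ^ q ^ m) ^ q ^ k = A ^ q ^ (k + m) := by
      rw [← pow_mul, ← pow_add, add_comm m k]
    rw [this]
    exact hbdc (k + m)
  have hA'1 : 1 ≤ A ^ q ^ m := one_le_pow₀ hA1
  set e : ℕ → Kf p v := RKaux.linv q c' with hedef
  have h_ec' : ∀ l, compC q e c' l = frobC (Kf p v) 0 l := RKaux.compC_linv q c' hc'0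
  have h_c'f : compC q c' (RKaux.rinv q c') = frobC (Kf p v) 0 :=
    funext (RKaux.compC_rinv q c' hc'0)
  have h_ec'fun : compC q e c' = frobC (Kf p v) 0 := funext h_ec'
  have h_e_eq : e = RKaux.rinv q c' := by
    funext l
    calc e l = compC q e (frobC (Kf p v) 0) l := (RKaux.compC_id_right q hq0 e l).symm
      _ = compC q e (compC q c' (RKaux.rinv q c')) l := by rw [h_c'f]
      _ = compC q (compC q e c') (RKaux.rinv q c') l := (RKaux.compC_assoc p v e c' _ l).symm
      _ = compC q (frobC (Kf p v) 0) (RKaux.rinv q c') l := by rw [h_ec'fun]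
      _ = RKaux.rinv q c' l := RKaux.compC_id_left q _ l
  have h_c'e : ∀ l, compC q c' e l = frobC (Kf p v) 0 l := by
    rw [h_e_eq]
    exact RKaux.compC_rinv q c' hc'0
  obtain ⟨B, hBpos, hBbd⟩ := RKaux.linv_bound p v hv c' hc'0 hA'1 hbd'
  refine ⟨c', e, ⟨A ^ q ^ m, by positivity, hbd'⟩, ⟨B, hBpos, hBbd⟩, h_c'e, h_ec', ?_⟩
  intro l
  unfold compC frobC
  by_cases hlm : m ≤ l
  · rw [Finset.sum_eq_single_of_mem (l - m) (Finset.mem_range.mpr (by omega))]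
    · rw [if_pos (by omega)]
      simp only [one_pow, mul_one, hc'def]
      congr 1
      omega
    · intro n hn hne
      simp only [Finset.mem_range] at hn
      rw [if_neg (by omega), zero_pow (pow_ne_zero _ hq0), mul_zero]
  · rw [hm' l (by omega)]
    refine (Finset.sum_eq_zero ?_).symm
    intro n hn
    simp only [Finset.mem_range] at hn
    rw [if_neg (by omega), zero_pow (pow_ne_zero _ hq0), mul_zero]
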